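/- Continuity of cycle-length formulas at Δ = δ₁: if δ₁ > 0 then T̃ + ln(1 - (a(e^{σ}-1)/β_L)e^{δ₁ - z̃₁}) equals T̃ + ln(1 + (a(e^{σ}-1)/β_U)e^{δ₁ - z̃₂} + (a(β_L+β_U)e^{τ + z̃₁ - z̃₂}/(β_U(β_L + a)))(e^{δ₁ - z̃₁} - 1)). -/

import Mathlib

set_option maxHeartbeats 1000000


open Real

theorem stmt12 (τ σ βL βU a z1 z2 Tper δ1 : ℝ)
    (hτ : 0 < τ) (hσ : 0 < σ) (hστ : σ ≤ τ)
    (hβL : 0 < βL) (hβU : 0 < βU) (ha : 0 < a) (haU : a < βU)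
    (hz1 : z1 = log ((βL + βU * (1 - exp (-τ))) / βL))
    (hz2 : z2 = z1 + τ + log ((βL * (1 - exp (-τ)) + βU) / βU))
    (hT : Tper = z2 + τ)
    (hδ1 : δ1 = log ((βL + βU * (1 - exp (-τ))) / (βL * exp σ + a * (exp σ - 1))))
    (hδ1pos : 0 < δ1) :
    Tper + log (1 - a * (exp σ - 1) / βL * exp (δ1 - z1)) =
      Tper + log (1 + a * (exp σ - 1) / βU * exp (δ1 - z2) +
        a * (βL + βU) * exp (τ + z1 - z2) / (βU * (βL + a)) * (exp (δ1 - z1) - 1)) := by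
  have hexpτ : exp (-τ) < 1 := by
    rw [exp_lt_one_iff]; linarith
  have hexpτ' : (1:ℝ) < exp τ := by
    rw [← exp_zero]; exact exp_lt_exp.mpr hτ
  have hexpσ : (1:ℝ) < exp σ := by
    rw [← exp_zero]; exact exp_lt_exp.mpr hσ
  have ht : (0:ℝ) < exp τ := exp_pos τ
  have hN : 0 < βL + βU * (1 - exp (-τ)) := by nlinarith [exp_pos (-τ)]
  have hD : 0 < βL * exp σ + a * (exp σ - 1) := by nlinarith
  have hE : 0 < βL * (1 - exp (-τ)) + βU := by nlinarith [exp_pos (-τ)]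
  have hF : 0 < βL * (exp τ - 1) + βU * exp τ := by nlinarith
  have htu : exp τ * exp (-τ) = 1 := by
    rw [← exp_add]; simp
  have e1 : exp z1 = (βL + βU * (1 - exp (-τ))) / βL := by
    rw [hz1, exp_log (by positivity)]
  have e2 : exp z2 = exp z1 * exp τ * ((βL * (1 - exp (-τ)) + βU) / βU) := by
    rw [hz2, exp_add, exp_add, exp_log (by positivity)]
  have ed : exp δ1 = (βL + βU * (1 - exp (-τ))) / (βL * exp σ + a * (exp σ - 1)) := by
    rw [hδ1, exp_log (by positivity)]
  have h1 : exp (δ1 - z1) = βL / (βL * exp σ + a * (exp σ - 1)) := by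
    rw [exp_sub, ed, e1]
    field_simp
  have hg : exp τ * (βL * (1 - exp (-τ)) + βU) = βL * (exp τ - 1) + βU * exp τ := by
    linear_combination (-βL) * htu
  have e2' : exp z2 = exp z1 * ((βL * (exp τ - 1) + βU * exp τ) / βU) := by
    rw [e2, ← hg]; ring
  have h2 : exp (δ1 - z2) =
      βL * βU / ((βL * exp σ + a * (exp σ - 1)) * (βL * (exp τ - 1) + βU * exp τ)) := by
    rw [exp_sub, ed, e2', e1]
    field_simp [hF.ne', hD.ne', hN.ne']
  have h3 : exp (τ + z1 - z2) = βU * exp τ / (βL * (exp τ - 1) + βU * exp τ) := by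
    rw [exp_sub, exp_add, e2']
    have h0 : exp z1 ≠ 0 := (exp_pos z1).ne'
    field_simp [hF.ne']
  congr 1
  rw [h1, h2, h3]
  congr 1
  have hLa : (0:ℝ) < βL + a := by linarith
  field_simp [hD.ne', hF.ne', hLa.ne', (by linarith : (0:ℝ) < exp σ * βL + a * (exp σ - 1)).ne']
  ring
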